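/- If b ∈ Θ, i.e. G(X,c,b)·E(H(Y,c)|X) ≥ 0 almost surely for all c ∈ C, then for every γ ∈ Γ and c ∈ C, G(X,c,b)·E(H(Y,c)|G(X,c,b),G(X,c,γ)) ≥ 0 almost surely, using the tower property: E(H(Y,c)|G(X,c,b),G(X,c,γ)) = E(E(H(Y,c)|X)|G(X,c,b),G(X,c,γ)) since G(X,c,b) and G(X,c,γ) are measurable functions of X. -/

import Mathlib

open MeasureTheory ProbabilityTheory

/-- Conditional expectation of `f` given the σ-algebra generated by the random element `X`. -/
noncomputable def condExpGiven {Ω 𝓧 : Type*} [MeasurableSpace Ω] [MeasurableSpace 𝓧]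
    (μ : Measure Ω) (X : Ω → 𝓧) (f : Ω → ℝ) : Ω → ℝ :=
  μ[f | MeasurableSpace.comap X inferInstance]

/-- If `b ∈ Θ`, i.e. `G(X,c,b)·E(H(Y,c)|X) ≥ 0` a.s. for all `c ∈ C`, then for
every `γ ∈ Γ` and `c ∈ C`, `G(X,c,b)·E(H(Y,c)|G(X,c,b),G(X,c,γ)) ≥ 0` a.s. -/
theorem theta_subset_theta_tilde {Ω 𝓧 𝓨 P C' : Type*}
    [MeasurableSpace Ω] [MeasurableSpace 𝓧] [MeasurableSpace 𝓨]
    (μ : Measure Ω) [IsProbabilityMeasure μ]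
    (X : Ω → 𝓧) (Y : Ω → 𝓨) (hX : Measurable X) (hY : Measurable Y)
    (Γ : Set P) (C : Set C') (β : P) (hβ : β ∈ Γ)
    (G : 𝓧 → C' → P → ℝ) (H : 𝓨 → C' → ℝ)
    (hG : ∀ c b, Measurable fun x => G x c b)
    (hH : ∀ c, Measurable fun y => H y c)
    (hHint : ∀ c, Integrable (fun ω => H (Y ω) c) μ)
    -- Assumption 2 (continuity)
    (hcont : ∀ b ∈ Γ, ∀ c ∈ C, μ {ω | G (X ω) c b = 0} = 0)
    (b : P) (hb : b ∈ Γ)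
    -- b ∈ Θ
    (hbTheta : ∀ c ∈ C, ∀ᵐ ω ∂μ,
      G (X ω) c b * condExpGiven μ X (fun ω' => H (Y ω') c) ω ≥ 0)
    -- the indexing variables are measurable functions of X (tower property applies)
    : ∀ γ ∈ Γ, ∀ c ∈ C,
      (∀ᵐ ω ∂μ,
        G (X ω) c b *
          condExpGiven μ (fun ω' => (G (X ω') c b, G (X ω') c γ))
            (fun ω' => H (Y ω') c) ω ≥ 0) ∧
      (condExpGiven μ (fun ω' => (G (X ω') c b, G (X ω') c γ))
          (fun ω' => H (Y ω') c) =ᵐ[μ]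
        condExpGiven μ (fun ω' => (G (X ω') c b, G (X ω') c γ))
          (condExpGiven μ X (fun ω' => H (Y ω') c))) := by
  intro γ hγ c hc
  have hbT := hbTheta c hc
  simp only [condExpGiven] at hbT ⊢
  set f : Ω → ℝ := fun ω' => H (Y ω') c with hfdef
  set π : Ω → ℝ × ℝ := fun ω' => (G (X ω') c b, G (X ω') c γ) with hπdef
  set m₁ : MeasurableSpace Ω := MeasurableSpace.comap X inferInstance with hm₁def
  set m₂ : MeasurableSpace Ω := MeasurableSpace.comap π inferInstance with hm₂def
  have hm₁ : m₁ ≤ _ := hX.comap_le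
  have hm₂₁ : m₂ ≤ m₁ := by
    have hcomp : π = (fun x : 𝓧 => (G x c b, G x c γ)) ∘ X := rfl
    rw [hm₂def, hcomp, ← MeasurableSpace.comap_comp]
    exact MeasurableSpace.comap_mono (((hG c b).prodMk (hG c γ)).comap_le)
  have hm₂ := hm₂₁.trans hm₁
  haveI : SigmaFinite (μ.trim hm₁) := IsFiniteMeasure.toSigmaFinite _
  haveI : SigmaFinite (μ.trim hm₂) := IsFiniteMeasure.toSigmaFinite _
  set g : Ω → ℝ := μ[f | m₁] with hgdef
  have htower : μ[g | m₂] =ᵐ[μ] μ[f | m₂] :=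
    condExp_condExp_of_le hm₂₁ hm₁
  refine ⟨?_, htower.symm⟩
  -- the positivity part
  have hπmeas : Measurable[m₂] π := Measurable.of_comap_le le_rfl
  have hφ : Measurable[m₂] fun ω => G (X ω) c b :=
    (measurable_fst.comp hπmeas : _)
  have hA : MeasurableSet[m₂] {ω | 0 < G (X ω) c b} := hφ measurableSet_Ioi
  have hB : MeasurableSet[m₂] {ω | G (X ω) c b < 0} := hφ measurableSet_Iio
  have hgint : Integrable g μ := integrable_condExp
  have hindA : μ[Set.indicator {ω | 0 < G (X ω) c b} g | m₂]
      =ᵐ[μ] Set.indicator {ω | 0 < G (X ω) c b} (μ[g | m₂]) :=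
    condExp_indicator hgint hA
  have hindB : μ[Set.indicator {ω | G (X ω) c b < 0} g | m₂]
      =ᵐ[μ] Set.indicator {ω | G (X ω) c b < 0} (μ[g | m₂]) :=
    condExp_indicator hgint hB
  have hnnA : 0 ≤ᵐ[μ] Set.indicator {ω | 0 < G (X ω) c b} g := by
    filter_upwards [hbT] with ω hω
    by_cases hmem : ω ∈ {ω | 0 < G (X ω) c b}
    · have h0 : 0 < G (X ω) c b := hmem
      simp only [Pi.zero_apply, Set.indicator_of_mem hmem]
      nlinarith [hω]
    · simp [Set.indicator_of_notMem hmem]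
  have hnpB : Set.indicator {ω | G (X ω) c b < 0} g ≤ᵐ[μ] 0 := by
    filter_upwards [hbT] with ω hω
    by_cases hmem : ω ∈ {ω | G (X ω) c b < 0}
    · have h0 : G (X ω) c b < 0 := hmem
      simp only [Pi.zero_apply, Set.indicator_of_mem hmem]
      nlinarith [hω]
    · simp [Set.indicator_of_notMem hmem]
  have hcA : 0 ≤ᵐ[μ] Set.indicator {ω | 0 < G (X ω) c b} (μ[g | m₂]) :=
    (condExp_nonneg hnnA).trans hindA.le
  have hcB : Set.indicator {ω | G (X ω) c b < 0} (μ[g | m₂]) ≤ᵐ[μ] 0 :=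
    hindB.symm.le.trans (condExp_nonpos hnpB)
  have hne : ∀ᵐ ω ∂μ, G (X ω) c b ≠ 0 := by
    rw [ae_iff]
    simpa using hcont b hb c hc
  filter_upwards [hcA, hcB, hne, htower] with ω h1 h2 h3 h4
  simp only [Pi.zero_apply] at h1 h2
  show 0 ≤ _
  rw [← h4]
  rcases h3.lt_or_gt with hlt | hgt
  · have heq : Set.indicator {ω | G (X ω) c b < 0} (μ[g | m₂]) ω = (μ[g|m₂]) ω :=
      Set.indicator_of_mem (show ω ∈ {ω | G (X ω) c b < 0} from hlt) _
    rw [heq] at h2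
    nlinarith [h2]
  · have heq : Set.indicator {ω | 0 < G (X ω) c b} (μ[g | m₂]) ω = (μ[g|m₂]) ω :=
      Set.indicator_of_mem (show ω ∈ {ω | 0 < G (X ω) c b} from hgt) _
    rw [heq] at h1
    have h1' : 0 ≤ (μ[g|m₂]) ω := h1
    exact mul_nonneg hgt.le h1'
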